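/- Let p_1 < p_2 < ... < p_r be primes and let I ⊆ {1,...,r} be nonempty with |I| = t. Then (t+1)·φ(∏_{i∈I} p_i) ≥ ∏_{i∈I} p_i, with equality if and only if either t = 1, I = {1} and p_1 = 2, or t = 2, I = {1,2}, p_1 = 2 and p_2 = 3. -/

import Mathlib

lemma arith_aux (a b : ℕ) (h : b + 2 ≤ a) :
    (b + 1) * a ≤ (b + 2) * (a - 1) ∧
      ((b + 2) * (a - 1) = (b + 1) * a → a = b + 2) := by
  obtain ⟨c, rfl⟩ := Nat.exists_eq_add_of_le h
  have h1 : b + 2 + c - 1 = b + 1 + c := by omega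
  rw [h1]
  have e : (b + 2) * (b + 1 + c) = (b + 1) * (b + 2 + c) + c := by ring
  rw [e]
  refine ⟨Nat.le_add_right _ _, fun he => ?_⟩
  have hc : c = 0 := by simpa using he
  omega

lemma p_ge (r : ℕ) (p : ℕ → ℕ) (hp : ∀ i < r, (p i).Prime)
    (hmono : ∀ i j, i < j → j < r → p i < p j) :
    ∀ i < r, i + 2 ≤ p i := by
  intro i
  induction i with
  | zero => intro h; simpa using (hp 0 h).two_le
  | succ n ih =>
    intro h
    have h1 := ih (by omega)
    have h2 := hmono n (n + 1) (by omega) h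
    omega

lemma tot_eq (r : ℕ) (p : ℕ → ℕ) (hp : ∀ i < r, (p i).Prime)
    (hmono : ∀ i j, i < j → j < r → p i < p j) :
    ∀ I : Finset ℕ, I ⊆ Finset.range r →
      Nat.totient (∏ i ∈ I, p i) = ∏ i ∈ I, (p i - 1) := by
  intro I
  induction I using Finset.induction_on with
  | empty => simp
  | @insert a s ha ih =>
    intro hsub
    have har : a < r := Finset.mem_range.mp (hsub (Finset.mem_insert_self a s))
    have hs : s ⊆ Finset.range r := fun x hx => hsub (Finset.mem_insert_of_mem hx)
    have hcop : Nat.Coprime (p a) (∏ i ∈ s, p i) := by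
      refine Nat.Coprime.prod_right fun i hi => ?_
      have hir : i < r := Finset.mem_range.mp (hs hi)
      have hne : p a ≠ p i := by
        rcases lt_or_gt_of_ne (show a ≠ i from fun h => ha (h ▸ hi)) with h | h
        · exact (hmono a i h hir).ne
        · exact (hmono i a h har).ne'
      exact (Nat.coprime_primes (hp a har) (hp i hir)).mpr hne
    rw [Finset.prod_insert ha, Finset.prod_insert ha, Nat.totient_mul hcop,
      Nat.totient_prime (hp a har), ih hs]

lemma main_lem (r : ℕ) (p : ℕ → ℕ) (hp : ∀ i < r, (p i).Prime)
    (hmono : ∀ i j, i < j → j < r → p i < p j) :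
    ∀ I : Finset ℕ, I ⊆ Finset.range r → I.Nonempty →
      (∏ i ∈ I, p i ≤ (I.card + 1) * ∏ i ∈ I, (p i - 1)) ∧
      ((I.card + 1) * ∏ i ∈ I, (p i - 1) = ∏ i ∈ I, p i ↔
        (I = {0} ∧ p 0 = 2) ∨ (I = ({0, 1} : Finset ℕ) ∧ p 0 = 2 ∧ p 1 = 3)) := by
  intro I
  induction I using Finset.strongInduction with
  | _ I IH =>
    intro hI hne
    -- setup
    set m := I.max' hne with hm_def
    have hmI : m ∈ I := I.max'_mem hne
    set J := I.erase m with hJ_def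
    have hJI : J ⊂ I := Finset.erase_ssubset hmI
    have hJsub : J ⊆ Finset.range r := (Finset.erase_subset m I).trans hI
    have hcardpos : 0 < I.card := Finset.card_pos.mpr hne
    have hcard : I.card = J.card + 1 := by
      rw [hJ_def, Finset.card_erase_of_mem hmI]; omega
    have hmr : m < r := Finset.mem_range.mp (hI hmI)
    have hpm : (p m).Prime := hp m hmr
    have hprodP : ∏ i ∈ I, p i = p m * ∏ i ∈ J, p i :=
      (Finset.mul_prod_erase I p hmI).symm
    have hprodQ : ∏ i ∈ I, (p i - 1) = (p m - 1) * ∏ i ∈ J, (p i - 1) :=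
      (Finset.mul_prod_erase I (fun i => p i - 1) hmI).symm
    set P' := ∏ i ∈ J, p i with hP'
    set Q' := ∏ i ∈ J, (p i - 1) with hQ'
    have hp2 : ∀ i ∈ I, 2 ≤ p i := fun i hi =>
      (hp i (Finset.mem_range.mp (hI hi))).two_le
    have hQpos : 0 < Q' := Finset.prod_pos fun i hi => by
      have := hp2 i (Finset.mem_of_mem_erase hi); omega
    have hPpos : 0 < P' := Finset.prod_pos fun i hi => by
      have := hp2 i (Finset.mem_of_mem_erase hi); omega
    -- J.card ≤ m
    have hJm : J ⊆ Finset.range m := by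
      intro j hj
      have hj1 : j ∈ I := Finset.mem_of_mem_erase hj
      have hj2 : j ≠ m := Finset.ne_of_mem_erase hj
      have := I.le_max' j hj1
      exact Finset.mem_range.mpr (lt_of_le_of_ne this hj2)
    have hJcard : J.card ≤ m := by
      simpa using Finset.card_le_card hJm
    have hpm_ge : J.card + 2 ≤ p m := by
      have := p_ge r p hp hmono m hmr
      omega
    have harith := arith_aux (p m) J.card hpm_ge
    -- the inequality from IH (or trivially for J = ∅)
    have hJineq : P' ≤ (J.card + 1) * Q' := by
      rcases J.eq_empty_or_nonempty with hJe | hJne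
      · simp [hP', hQ', hJe]
      · exact (IH J hJI hJsub hJne).1
    -- chain
    have hchain1 : p m * P' ≤ p m * ((J.card + 1) * Q') :=
      Nat.mul_le_mul_left _ hJineq
    have hB : p m * ((J.card + 1) * Q') = ((J.card + 1) * p m) * Q' := by ring
    have hC : (J.card + 2) * ((p m - 1) * Q') = ((J.card + 2) * (p m - 1)) * Q' := by
      ring
    have hchain2 : p m * ((J.card + 1) * Q') ≤ (J.card + 2) * ((p m - 1) * Q') := by
      rw [hB, hC]
      exact Nat.mul_le_mul_right _ harith.1
    constructor
    · calc ∏ i ∈ I, p i = p m * P' := hprodP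
        _ ≤ p m * ((J.card + 1) * Q') := hchain1
        _ ≤ (J.card + 2) * ((p m - 1) * Q') := hchain2
        _ = (I.card + 1) * ∏ i ∈ I, (p i - 1) := by rw [hcard, hprodQ]
    · constructor
      · intro heq
        rw [hcard, hprodQ, hprodP] at heq
        -- heq : (J.card + 1 + 1) * ((p m - 1) * Q') = p m * P'
        have heq' : (J.card + 2) * ((p m - 1) * Q') = p m * P' := by
          exact heq
        have e1 : p m * P' = p m * ((J.card + 1) * Q') :=
          le_antisymm hchain1 (heq' ▸ hchain2)
        have e2 : p m * ((J.card + 1) * Q') = (J.card + 2) * ((p m - 1) * Q') :=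
          le_antisymm hchain2 (heq'.le.trans hchain1)
        have hP'eq : P' = (J.card + 1) * Q' :=
          Nat.eq_of_mul_eq_mul_left hpm.pos e1
        have e2' : ((J.card + 2) * (p m - 1)) * Q' = ((J.card + 1) * p m) * Q' := by
          rw [← hB, ← hC, e2]
        have hpmeq : p m = J.card + 2 :=
          harith.2 (Nat.eq_of_mul_eq_mul_right hQpos e2')
        rcases J.eq_empty_or_nonempty with hJe | hJne
        · -- t = 1 case
          have hIm : I = {m} := by
            have := Finset.insert_erase hmI
            rw [← hJ_def, hJe] at this
            simpa using this.symm
          have hm2 : p m = 2 := by rw [hpmeq, hJe]; simp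
          have hm0 : m = 0 := by
            by_contra h
            have h0r : 0 < r := by omega
            have := hmono 0 m (by omega) hmr
            have := (hp 0 h0r).two_le
            omega
          exact Or.inl ⟨by rw [hIm, hm0], by rw [← hm0, hm2]⟩
        · have hJcard1 : 0 < J.card := Finset.card_pos.mpr hJne
          have hIHeq := ((IH J hJI hJsub hJne).2).mp hP'eq.symm
          rcases hIHeq with ⟨hJ0, hp0⟩ | ⟨hJ01, hp0, hp1⟩
          · -- J = {0}, so p m = 3, m = 1
            have hJc : J.card = 1 := by rw [hJ0]; rfl
            have hpm3 : p m = 3 := by omega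
            have h0I : (0 : ℕ) ∈ I := Finset.mem_of_mem_erase (hJ0 ▸ Finset.mem_singleton_self 0)
            have hm_ne0 : m ≠ 0 := by
              intro h
              have : (0 : ℕ) ∈ J := hJ0 ▸ Finset.mem_singleton_self 0
              exact Finset.ne_of_mem_erase this (h ▸ rfl)
            have hm1 : m = 1 := by
              by_contra h
              have hm2 : 2 ≤ m := by omega
              have h1r : 1 < r := by omega
              have hA := hmono 1 m (by omega) hmr
              have hB2 := hmono 0 1 (by omega) h1r
              have := (hp 1 h1r).two_le
              omega
            have hIm : I = {0, 1} := by
              have := Finset.insert_erase hmI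
              rw [← hJ_def, hJ0, hm1] at this
              rw [← this]
              decide
            exact Or.inr ⟨hIm, hp0, by rw [← hm1, hpm3]⟩
          · -- J = {0,1}: p m = 4, contradiction
            have hJc : J.card = 2 := by rw [hJ01]; rfl
            have hpm4 : p m = 4 := by omega
            exact absurd (hpm4 ▸ hpm) (by norm_num)
      · rintro (⟨hI0, hp0⟩ | ⟨hI01, hp0, hp1⟩)
        · rw [hI0]
          simp [hp0]
        · rw [hI01]
          rw [Finset.prod_pair (by norm_num : (0:ℕ) ≠ 1),
            Finset.prod_pair (by norm_num : (0:ℕ) ≠ 1)]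
          rw [hp0, hp1]
          rfl

theorem stmt_1 (r : ℕ) (p : ℕ → ℕ)
    (hp : ∀ i < r, (p i).Prime)
    (hmono : ∀ i j, i < j → j < r → p i < p j)
    (I : Finset ℕ) (hI : I ⊆ Finset.range r) (hne : I.Nonempty)
    (t : ℕ) (ht : t = I.card) :
    (t + 1) * Nat.totient (∏ i ∈ I, p i) ≥ ∏ i ∈ I, p i ∧
    ((t + 1) * Nat.totient (∏ i ∈ I, p i) = ∏ i ∈ I, p i ↔
      (t = 1 ∧ I = {0} ∧ p 0 = 2) ∨
      (t = 2 ∧ I = {0, 1} ∧ p 0 = 2 ∧ p 1 = 3)) := by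
  subst ht
  rw [tot_eq r p hp hmono I hI]
  obtain ⟨h1, h2⟩ := main_lem r p hp hmono I hI hne
  refine ⟨h1, ?_⟩
  rw [h2]
  constructor
  · rintro (⟨hI0, hp0⟩ | ⟨hI01, hp0, hp1⟩)
    · exact Or.inl ⟨by rw [hI0]; rfl, hI0, hp0⟩
    · exact Or.inr ⟨by rw [hI01]; rfl, hI01, hp0, hp1⟩
  · rintro (⟨_, hI0, hp0⟩ | ⟨_, hI01, hp0, hp1⟩)
    · exact Or.inl ⟨hI0, hp0⟩
    · exact Or.inr ⟨hI01, hp0, hp1⟩
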